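/- Let t ≥ 2 and let S be a vertex disjoint union of cliques that is not t-Ramsey. Then any union of cliques (not necessarily vertex disjoint) with the same weights and orders as the cliques of S is also not t-Ramsey. -/

import Mathlib

set_option maxHeartbeats 1000000

/-- An embedding of the hypercube `Q_d` into `Q_n`: an injective map on vertex sets
(identified with finite subsets of `Fin d`, resp. `Fin n`) preserving the edges,
where two vertices are adjacent iff their symmetric difference has exactly one element. -/
def IsCubeEmbedding {d n : ℕ} (ψ : Finset (Fin d) → Finset (Fin n)) : Prop :=
  Function.Injective ψ ∧
    ∀ A B : Finset (Fin d), (symmDiff A B).card = 1 → (symmDiff (ψ A) (ψ B)).card = 1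

/-- `S ⊆ V_n` contains a copy of `F ⊆ V_d`. -/
def ContainsCopy {d n : ℕ} (F : Set (Finset (Fin d))) (S : Set (Finset (Fin n))) : Prop :=
  ∃ ψ : Finset (Fin d) → Finset (Fin n), IsCubeEmbedding ψ ∧ ∀ A ∈ F, ψ A ∈ S

/-- `F ⊆ V_d` is `t`-Ramsey: for all sufficiently large `n`, every `t`-coloring of `Q_n`
contains a monochromatic copy of `F`. -/
def IsRamsey (t d : ℕ) (F : Set (Finset (Fin d))) : Prop :=
  ∃ n₀ : ℕ, ∀ n, n₀ ≤ n → ∀ c : Finset (Fin n) → Fin t,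
    ∃ i : Fin t, ContainsCopy F {A | c A = i}

section helpers
variable {α : Type*} [DecidableEq α]

lemma symmDiff_empty' (s : Finset α) : symmDiff s (∅ : Finset α) = s := by
  ext z; simp [Finset.mem_symmDiff]

lemma symmDiff_left_cancel' {X P Q : Finset α} (h : symmDiff X P = symmDiff X Q) : P = Q := by
  ext z
  have := Finset.ext_iff.mp h z
  simp only [Finset.mem_symmDiff] at this
  tauto

lemma symmDiff_singleton_of_not_mem {s : Finset α} {x : α}
    (hx : x ∉ s) : symmDiff s {x} = insert x s := by
  ext z
  simp only [Finset.mem_symmDiff, Finset.mem_singleton, Finset.mem_insert]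
  by_cases hz : z = x
  · subst hz; tauto
  · tauto

lemma symmDiff_singleton_of_mem {s : Finset α} {x : α}
    (hx : x ∈ s) : symmDiff s {x} = s.erase x := by
  ext z
  simp only [Finset.mem_symmDiff, Finset.mem_singleton, Finset.mem_erase]
  by_cases hz : z = x
  · subst hz; tauto
  · tauto

lemma symmDiff_erase {A : Finset α} {x : α} (hx : x ∈ A) :
    symmDiff A (A.erase x) = {x} := by
  ext z
  simp only [Finset.mem_symmDiff, Finset.mem_erase, Finset.mem_singleton]
  by_cases hz : z = x
  · subst hz; tauto
  · tauto

lemma eq_symmDiff_of_symmDiff_eq {A B C : Finset α}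
    (h : symmDiff A B = C) : A = symmDiff B C := by
  subst h
  ext z
  simp only [Finset.mem_symmDiff]
  tauto

lemma erase_symmDiff_erase {A : Finset α} {x y : α} (hx : x ∈ A) (hy : y ∈ A)
    (hxy : x ≠ y) : symmDiff (A.erase x) (A.erase y) = {x, y} := by
  ext z
  simp only [Finset.mem_symmDiff, Finset.mem_erase, Finset.mem_insert, Finset.mem_singleton]
  by_cases hzx : z = x
  · subst hzx; tauto
  · by_cases hzy : z = y
    · subst hzy; tauto
    · tauto

end helpers

lemma cube_embedding_rigid {d n : ℕ} {ψ : Finset (Fin d) → Finset (Fin n)}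
    (hψ : IsCubeEmbedding ψ) :
    ∃ c : Fin d → Fin n, Function.Injective c ∧
      ∀ A : Finset (Fin d), ψ A = symmDiff (ψ ∅) (A.image c) := by
  obtain ⟨hinj, hedge⟩ := hψ
  have hsing : ∀ x : Fin d, ∃ z : Fin n, symmDiff (ψ {x}) (ψ ∅) = {z} := by
    intro x
    have h1 : (symmDiff ({x} : Finset (Fin d)) (∅ : Finset (Fin d))).card = 1 := by
      rw [symmDiff_empty']; simp
    exact Finset.card_eq_one.mp (hedge _ _ h1)
  choose c hc using hsing
  have hcs : ∀ x, ψ {x} = symmDiff (ψ ∅) {c x} := by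
    intro x
    have := eq_symmDiff_of_symmDiff_eq (hc x)
    rw [this, symmDiff_comm]
  have hcinj : Function.Injective c := by
    intro x y hxy
    by_contra hne
    have : ψ {x} = ψ {y} := by rw [hcs x, hcs y, hxy]
    have := hinj this
    exact hne (by simpa [Finset.singleton_inj] using this)
  refine ⟨c, hcinj, ?_⟩
  intro A
  induction A using Finset.strongInduction with
  | _ A IH =>
  rcases Nat.lt_or_ge A.card 2 with hA2 | hA2
  · interval_cases h : A.card
    · rw [Finset.card_eq_zero.mp h]
      rw [Finset.image_empty, symmDiff_empty']
    · obtain ⟨x, rfl⟩ := Finset.card_eq_one.mp h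
      rw [hcs x, Finset.image_singleton]
  · -- |A| ≥ 2
    obtain ⟨x, hx, y, hy, hxy⟩ := Finset.one_lt_card.mp hA2
    set A₁ := A.erase x with hA₁def
    set A₂ := A.erase y with hA₂def
    have hyA₁ : y ∈ A₁ := Finset.mem_erase.mpr ⟨fun h => hxy h.symm, hy⟩
    have hA₁ss : A₁ ⊂ A := Finset.erase_ssubset hx
    have hA₂ss : A₂ ⊂ A := Finset.erase_ssubset hy
    have hIH₁ := IH A₁ hA₁ss
    have hIH₂ := IH A₂ hA₂ss
    have he₁ : (symmDiff (ψ A) (ψ A₁)).card = 1 :=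
      hedge _ _ (by rw [symmDiff_erase hx]; simp)
    have he₂ : (symmDiff (ψ A) (ψ A₂)).card = 1 :=
      hedge _ _ (by rw [symmDiff_erase hy]; simp)
    obtain ⟨z₁, hz₁⟩ := Finset.card_eq_one.mp he₁
    obtain ⟨z₂, hz₂⟩ := Finset.card_eq_one.mp he₂
    have hψA₁ : ψ A = symmDiff (ψ A₁) {z₁} := eq_symmDiff_of_symmDiff_eq hz₁
    have hψA₂ : ψ A = symmDiff (ψ A₂) {z₂} := eq_symmDiff_of_symmDiff_eq hz₂
    -- key claim: z₁ = c x
    have hz₁cx : z₁ = c x := by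
      by_contra hne
      -- first: {z₁} Δ {z₂} = {c x, c y}
      have h4 : symmDiff (A₁.image c) {z₁} = symmDiff (A₂.image c) {z₂} := by
        apply symmDiff_left_cancel' (X := ψ ∅)
        rw [← symmDiff_assoc, ← symmDiff_assoc, ← hIH₁, ← hIH₂, ← hψA₁, ← hψA₂]
      have h5 : symmDiff ({z₁} : Finset (Fin n)) {z₂} = {c x, c y} := by
        have himg : symmDiff (A₁.image c) (A₂.image c) = {c x, c y} := by
          rw [← Finset.image_symmDiff _ _ hcinj, erase_symmDiff_erase hx hy hxy]
          rw [Finset.image_insert, Finset.image_singleton]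
        rw [← himg]
        ext u
        have h4u := Finset.ext_iff.mp h4 u
        simp only [Finset.mem_symmDiff, Finset.mem_singleton] at h4u ⊢
        tauto
      have hz₁z₂ : z₁ ≠ z₂ := by
        intro h
        subst h
        rw [symmDiff_self] at h5
        have : c x ∈ (⊥ : Finset (Fin n)) := by rw [h5]; simp
        simp at this
      have hz₁mem : z₁ ∈ ({c x, c y} : Finset (Fin n)) := by
        rw [← h5]
        simp [Finset.mem_symmDiff, hz₁z₂]
      have hz₁cy : z₁ = c y := by
        rcases Finset.mem_insert.mp hz₁mem with h | h
        · exact absurd h hne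
        · exact Finset.mem_singleton.mp h
      -- then ψ A = ψ (A₁.erase y), contradiction with injectivity
      have hcyA₁ : c y ∈ A₁.image c := Finset.mem_image_of_mem c hyA₁
      have : ψ A = ψ (A₁.erase y) := by
        rw [hψA₁, hIH₁, hz₁cy, symmDiff_assoc, symmDiff_singleton_of_mem hcyA₁,
          ← Finset.image_erase hcinj A₁ y]
        exact (IH (A₁.erase y) (lt_of_le_of_lt (Finset.le_iff_subset.mpr (Finset.erase_subset y A₁)) hA₁ss)).symm
      have hAeq := hinj this
      have hc1 : (A₁.erase y).card + 1 = A₁.card := Finset.card_erase_add_one hyA₁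
      have hc2 : A₁.card + 1 = A.card := Finset.card_erase_add_one hx
      have hcc : A.card = (A₁.erase y).card := by rw [hAeq]
      omega
    rw [hψA₁, hIH₁, hz₁cx, symmDiff_assoc]
    congr 1
    have hcxA₁ : c x ∉ A₁.image c := by
      simp only [Finset.mem_image, not_exists]
      rintro w ⟨hw, hcw⟩
      have : w = x := hcinj hcw
      subst this
      exact (Finset.mem_erase.mp hw).1 rfl
    rw [symmDiff_singleton_of_not_mem hcxA₁, ← Finset.image_insert, Finset.insert_erase hx]


/-- Finite hypergraph Ramsey over ℕ: for uniformity `r`, `t` colors, target size `m`. -/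
lemma ramseyU (t : ℕ) (ht : 0 < t) : ∀ r m : ℕ, ∃ N : ℕ, 0 < N ∧
    ∀ (c : Finset ℕ → Fin t) (S : Finset ℕ), N ≤ S.card →
      ∃ M : Finset ℕ, M ⊆ S ∧ M.card = m ∧ ∃ i : Fin t,
        ∀ e : Finset ℕ, e ⊆ M → e.card = r → c e = i := by
  intro r
  induction r with
  | zero =>
    intro m
    refine ⟨m + 1, Nat.succ_pos m, ?_⟩
    intro c S hS
    obtain ⟨M, hMS, hMcard⟩ := Finset.exists_subset_card_eq (show m ≤ S.card by omega)
    refine ⟨M, hMS, hMcard, c ∅, ?_⟩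
    intro e he hecard
    rw [Finset.card_eq_zero.mp hecard]
  | succ r IHr =>
    -- inner lemma: extract k elements with min-tagging
    have inner : ∀ k : ℕ, ∃ N : ℕ, 0 < N ∧
        ∀ (c : Finset ℕ → Fin t) (S : Finset ℕ), N ≤ S.card →
          ∃ (xs : Finset ℕ) (tag : ℕ → Fin t), xs ⊆ S ∧ xs.card = k ∧
            ∀ e : Finset ℕ, (he : e.Nonempty) → e ⊆ xs → e.card = r + 1 →
              c e = tag (e.min' he) := by
      intro k
      induction k with
      | zero =>
        refine ⟨1, Nat.one_pos, ?_⟩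
        intro c S hS
        exact ⟨∅, fun _ => ⟨0, ht⟩, Finset.empty_subset S, rfl, by
          intro e he hesub _
          exact absurd (Finset.subset_empty.mp hesub) (Finset.nonempty_iff_ne_empty.mp he)⟩
      | succ k IHk =>
        obtain ⟨Nk, hNk, hIHk⟩ := IHk
        obtain ⟨Nr, hNr, hIHr⟩ := IHr Nk
        refine ⟨Nr + 1, Nat.succ_pos _, ?_⟩
        intro c S hS
        have hSne : S.Nonempty := Finset.card_pos.mp (by omega)
        set x := S.min' hSne with hxdef
        have hxS : x ∈ S := S.min'_mem hSne
        set S' := S.erase x with hS'def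
        have hS'card : Nr ≤ S'.card := by
          have h1 : S'.card + 1 = S.card := Finset.card_erase_add_one hxS
          omega
        obtain ⟨U, hUS', hUcard, i, hUmono⟩ := hIHr (fun e => c (insert x e)) S' hS'card
        obtain ⟨xs', tag', hxs'U, hxs'card, htag'⟩ := hIHk c U (le_of_eq hUcard.symm)
        have hxU : x ∉ U := fun h => (Finset.mem_erase.mp (hUS' h)).1 rfl
        have hxxs' : x ∉ xs' := fun h => hxU (hxs'U h)
        refine ⟨insert x xs', Function.update tag' x i, ?_, ?_, ?_⟩
        · intro z hz
          rcases Finset.mem_insert.mp hz with rfl | hz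
          · exact hxS
          · exact Finset.erase_subset x S (hUS' (hxs'U hz))
        · rw [Finset.card_insert_of_notMem hxxs', hxs'card]
        · intro e he hesub hecard
          by_cases hxe : x ∈ e
          · have hmin : e.min' he = x := by
              apply le_antisymm
              · exact Finset.min'_le e x hxe
              · apply Finset.le_min'
                intro z hz
                have hzS : z ∈ S := by
                  rcases Finset.mem_insert.mp (hesub hz) with rfl | h
                  · exact hxS
                  · exact Finset.erase_subset x S (hUS' (hxs'U h))
                exact S.min'_le z hzS
            rw [hmin, Function.update_self]
            have heerase : e.erase x ⊆ xs' := by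
              intro z hz
              have hz' := Finset.mem_erase.mp hz
              rcases Finset.mem_insert.mp (hesub hz'.2) with h | h
              · exact absurd h hz'.1
              · exact h
            have : c e = c (insert x (e.erase x)) := by rw [Finset.insert_erase hxe]
            rw [this]
            refine hUmono (e.erase x) (fun z hz => hxs'U (heerase hz)) ?_
            have := Finset.card_erase_add_one hxe
            omega
          · have hesub' : e ⊆ xs' := by
              intro z hz
              rcases Finset.mem_insert.mp (hesub hz) with rfl | h
              · exact absurd hz hxe
              · exact h
            rw [htag' e he hesub' hecard]
            have : e.min' he ≠ x := fun h => hxe (h ▸ e.min'_mem he)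
            rw [Function.update_of_ne this]
    -- outer: pigeonhole on tags
    intro m
    obtain ⟨Nin, hNin, hinner⟩ := inner (t * m + 1)
    refine ⟨Nin, hNin, ?_⟩
    intro c S hS
    obtain ⟨xs, tag, hxsS, hxscard, htag⟩ := hinner c S hS
    -- find a popular tag
    have hmaps : ∀ z ∈ xs, tag z ∈ (Finset.univ : Finset (Fin t)) := by intros; simp
    have hcard : (Finset.univ : Finset (Fin t)).card * m < xs.card := by
      rw [hxscard, Finset.card_univ, Fintype.card_fin]
      omega
    obtain ⟨i, _, hfib⟩ := Finset.exists_lt_card_fiber_of_mul_lt_card_of_maps_to hmaps hcard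
    obtain ⟨M, hMfib, hMcard⟩ := Finset.exists_subset_card_eq
      (le_of_lt hfib)
    have hMxs : M ⊆ xs := hMfib.trans (Finset.filter_subset _ _)
    refine ⟨M, hMxs.trans hxsS, hMcard, i, ?_⟩
    intro e hesub hecard
    have hene : e.Nonempty := Finset.card_pos.mp (by omega)
    rw [htag e hene (hesub.trans hMxs) hecard]
    have : e.min' hene ∈ M := hesub (e.min'_mem hene)
    exact (Finset.mem_filter.mp (hMfib this)).2

/-- Canonical (layered) Ramsey: a large set on which the coloring depends only on
cardinality, for all cardinalities up to `r`. -/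
lemma canonU (t : ℕ) (ht : 0 < t) (m : ℕ) : ∀ r : ℕ, ∃ N : ℕ, 0 < N ∧
    ∀ (c : Finset ℕ → Fin t) (S : Finset ℕ), N ≤ S.card →
      ∃ (M : Finset ℕ) (g : ℕ → Fin t), M ⊆ S ∧ M.card = m ∧
        ∀ e : Finset ℕ, e ⊆ M → e.card ≤ r → c e = g e.card := by
  intro r
  induction r with
  | zero =>
    refine ⟨m + 1, Nat.succ_pos m, ?_⟩
    intro c S hS
    obtain ⟨M, hMS, hMcard⟩ := Finset.exists_subset_card_eq (show m ≤ S.card by omega)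
    refine ⟨M, fun _ => c ∅, hMS, hMcard, ?_⟩
    intro e he hecard
    rw [Finset.card_eq_zero.mp (Nat.le_zero.mp hecard)]
  | succ r IHr =>
    obtain ⟨Nc, hNc, hIHc⟩ := IHr
    obtain ⟨Nram, hNram, hram⟩ := ramseyU t ht (r + 1) Nc
    refine ⟨Nram, hNram, ?_⟩
    intro c S hS
    obtain ⟨M₁, hM₁S, hM₁card, i, hmono⟩ := hram c S hS
    obtain ⟨M, g, hMM₁, hMcard, hg⟩ := hIHc c M₁ (le_of_eq hM₁card.symm)
    refine ⟨M, fun k => if k = r + 1 then i else g k, hMM₁.trans hM₁S, hMcard, ?_⟩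
    intro e hesub hecard
    rcases Nat.lt_or_ge e.card (r + 1) with h | h
    · rw [hg e hesub (by omega)]
      simp only [if_neg (by omega : ¬ e.card = r + 1)]
    · have : e.card = r + 1 := by omega
      rw [this]
      simp only [if_pos rfl]
      exact hmono e (hesub.trans hMM₁) ‹e.card = r + 1›

/-- Canonical layered subcube inside `Q_n`. -/
lemma canonFin (t : ℕ) (ht : 0 < t) (m' : ℕ) : ∃ N : ℕ, 0 < N ∧
    ∀ n : ℕ, N ≤ n → ∀ χ : Finset (Fin n) → Fin t,
      ∃ (M : Finset (Fin n)) (g : ℕ → Fin t), M.card = m' ∧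
        ∀ A : Finset (Fin n), A ⊆ M → χ A = g A.card := by
  obtain ⟨N, hN, hcanon⟩ := canonU t ht m' m'
  refine ⟨N, hN, ?_⟩
  intro n hn χ
  set c : Finset ℕ → Fin t :=
    fun e => χ ((e.filter (· < n)).attachFin (fun m hm => (Finset.mem_filter.mp hm).2))
    with hcdef
  have hS : N ≤ (Finset.range n).card := by rw [Finset.card_range]; exact hn
  obtain ⟨Mh, g, hMhS, hMhcard, hg⟩ := hcanon c (Finset.range n) hS
  have hlt : ∀ z ∈ Mh, z < n := fun z hz => Finset.mem_range.mp (hMhS hz)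
  refine ⟨Mh.attachFin hlt, g, by rw [Finset.card_attachFin]; exact hMhcard, ?_⟩
  intro A hA
  set e := A.image Fin.val with hedef
  have hesub : e ⊆ Mh := by
    intro z hz
    obtain ⟨v, hv, rfl⟩ := Finset.mem_image.mp hz
    exact (Finset.mem_attachFin hlt).mp (hA hv)
  have hecard : e.card = A.card := Finset.card_image_of_injective A Fin.val_injective
  have hefilter : e.filter (· < n) = e := by
    apply Finset.filter_true_of_mem
    intro z hz
    obtain ⟨v, _, rfl⟩ := Finset.mem_image.mp hz
    exact v.is_lt
  have hattach : ∀ (h : ∀ z ∈ e.filter (· < n), z < n),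
      (e.filter (· < n)).attachFin h = A := by
    intro h
    ext v
    rw [Finset.mem_attachFin, hefilter]
    constructor
    · intro hv
      obtain ⟨w, hw, hwv⟩ := Finset.mem_image.mp hv
      rwa [← Fin.val_injective hwv]
    · exact fun hv => Finset.mem_image_of_mem _ hv
  have hAcard : A.card ≤ m' := by
    have h1 := Finset.card_le_card hA
    rwa [Finset.card_attachFin, hMhcard] at h1
  have hthis := hg e hesub (by rw [hecard]; exact hAcard)
  rw [hcdef] at hthis
  simp only at hthis
  rw [hattach] at hthis
  rw [hthis, hecard]

lemma symmDiff_cancel_left'' {α : Type*} [DecidableEq α] (X P Q : Finset α) :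
    symmDiff (symmDiff X P) (symmDiff X Q) = symmDiff P Q := by
  ext z
  simp only [Finset.mem_symmDiff]
  tauto

lemma std_isCubeEmbedding {d n : ℕ} (X : Finset (Fin n)) (f : Fin d → Fin n)
    (hf : Function.Injective f) :
    IsCubeEmbedding (fun B => symmDiff X (B.image f)) := by
  constructor
  · intro B₁ B₂ h
    simp only at h
    have h2 : B₁.image f = B₂.image f := by
      have := congrArg (fun Z => symmDiff X Z) h
      simpa [symmDiff_symmDiff_cancel_left] using this
    exact Finset.image_injective hf h2
  · intro A B hAB
    simp only
    rw [symmDiff_cancel_left'', ← Finset.image_symmDiff _ _ hf,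
      Finset.card_image_of_injective _ hf]
    exact hAB

lemma symmDiff_eq_sdiff_union_sdiff {α : Type*} [DecidableEq α] (s u : Finset α) :
    symmDiff s u = (s \ u) ∪ (u \ s) := by
  ext z
  simp only [Finset.mem_symmDiff, Finset.mem_union, Finset.mem_sdiff]

lemma symmDiff_subset_union {α : Type*} [DecidableEq α] (s u : Finset α) :
    symmDiff s u ⊆ s ∪ u := by
  rw [symmDiff_eq_sdiff_union_sdiff]
  exact Finset.union_subset_union (Finset.sdiff_subset) (Finset.sdiff_subset)

lemma card_symmDiff_parts {α : Type*} [DecidableEq α] (s u : Finset α) :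
    (symmDiff s u).card = (s \ u).card + (u \ s).card := by
  rw [symmDiff_eq_sdiff_union_sdiff]
  exact Finset.card_union_of_disjoint (disjoint_sdiff_sdiff)

theorem not_ramsey_of_not_ramsey_disjoint (t : ℕ) (ht : 2 ≤ t) (s : ℕ)
    (a tt : Fin s → ℕ) (d : ℕ) (K : Fin s → Finset (Fin d))
    (hK : ∀ i, (K i).card = a i + tt i)
    (hdisj : ∀ i j, i ≠ j → Disjoint (K i) (K j))
    (hS : ¬ IsRamsey t d (⋃ i, ↑((K i).powersetCard (a i))))
    (d' : ℕ) (K' : Fin s → Finset (Fin d'))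
    (hK' : ∀ i, (K' i).card = a i + tt i) :
    ¬ IsRamsey t d' (⋃ i, ↑((K' i).powersetCard (a i))) := by
  intro hRam'
  obtain ⟨m, h'⟩ := hRam'
  set D := ∑ j : Fin s, (a j + tt j) with hDdef
  obtain ⟨Ncan, hNcan, hcanon⟩ := canonFin t (by omega) (m + 6 * D)
  simp only [IsRamsey, not_exists] at hS
  have hbad := hS (Ncan + (m + 6 * D) + d)
  push_neg at hbad
  obtain ⟨n, hn, χ, hχ⟩ := hbad
  obtain ⟨M, g, hMcard, hlayer⟩ := hcanon n (by omega) χ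
  set χ' : Finset (Fin m) → Fin t := fun Z => g (Z.card + 3 * D) with hχ'def
  obtain ⟨i, ψ, hψemb, hψmono⟩ := h' m le_rfl χ'
  obtain ⟨c, hcinj, hcform⟩ := cube_embedding_rigid hψemb
  set X' : Finset (Fin m) := ψ ∅ with hX'def
  set x' := X'.card with hx'def
  have hx'le : x' ≤ m := by
    have := Finset.card_le_univ X'
    simpa using this
  -- the deep parts of the cliques
  set V : Fin s → Finset (Fin d') := fun j => (K' j).filter (fun y => c y ∈ X') with hVdef
  set w : Fin s → ℕ := fun j => (V j).card with hwdef
  have hVsub : ∀ j, V j ⊆ K' j := fun j => Finset.filter_subset _ _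
  have hwle : ∀ j, w j ≤ a j + tt j := by
    intro j
    rw [hwdef, ← hK' j]
    exact Finset.card_le_card (hVsub j)
  have hWex : ∀ j, ∃ Wj ⊆ K j, Wj.card = w j := by
    intro j
    exact Finset.exists_subset_card_eq (by rw [hK j]; exact hwle j)
  choose W hWsub hWcard using hWex
  -- ground set of S
  set G := Finset.univ.biUnion K with hGdef
  have hGcard : G.card = D := by
    rw [hGdef, Finset.card_biUnion (fun p _ q _ hpq => hdisj p q hpq)]
    rw [hDdef]
    exact Finset.sum_congr rfl (fun j _ => hK j)
  have hKsubG : ∀ j, K j ⊆ G := fun j => Finset.subset_biUnion_of_mem K (Finset.mem_univ j)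
  -- construct the injection f
  have hGM : G.card ≤ M.card := by rw [hGcard, hMcard]; omega
  obtain ⟨M₀, hM₀M, hM₀card⟩ := Finset.exists_subset_card_eq hGM
  set e₁ : ↥G ≃ ↥M₀ := Finset.equivOfCardEq hM₀card.symm with he₁def
  set Gc := (Finset.univ : Finset (Fin d)) \ G with hGcdef
  set Mc := (Finset.univ : Finset (Fin n)) \ M with hMcdef
  have hGcMc : Gc.card ≤ Mc.card := by
    rw [hGcdef, hMcdef, Finset.card_sdiff_of_subset (Finset.subset_univ _),
      Finset.card_sdiff_of_subset (Finset.subset_univ _)]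
    simp only [Finset.card_univ, Fintype.card_fin]
    rw [hGcard, hMcard]
    omega
  obtain ⟨Mc₀, hMc₀Mc, hMc₀card⟩ := Finset.exists_subset_card_eq hGcMc
  set e₂ : ↥Gc ≃ ↥Mc₀ := Finset.equivOfCardEq hMc₀card.symm with he₂def
  set f : Fin d → Fin n := fun z =>
    if h : z ∈ G then (e₁ ⟨z, h⟩ : Fin n) else (e₂ ⟨z, by rw [hGcdef]; simp [h]⟩ : Fin n)
    with hfdef
  have hfG : ∀ z ∈ G, f z ∈ M := by
    intro z hz
    rw [hfdef]
    simp only [dif_pos hz]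
    exact hM₀M (e₁ ⟨z, hz⟩).2
  have hfGc : ∀ z, z ∉ G → f z ∉ M := by
    intro z hz
    rw [hfdef]
    simp only [dif_neg hz]
    have := hMc₀Mc (e₂ ⟨z, by rw [hGcdef]; simp [hz]⟩).2
    rw [hMcdef] at this
    exact (Finset.mem_sdiff.mp this).2
  have hfinj : Function.Injective f := by
    intro z₁ z₂ h
    by_cases h₁ : z₁ ∈ G <;> by_cases h₂ : z₂ ∈ G
    · rw [hfdef] at h
      simp only [dif_pos h₁, dif_pos h₂] at h
      have := e₁.injective (Subtype.ext h)
      exact Subtype.ext_iff.mp this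
    · exact absurd (h ▸ hfG z₁ h₁) (hfGc z₂ h₂)
    · exact absurd (h.symm ▸ hfG z₂ h₂) (hfGc z₁ h₁)
    · rw [hfdef] at h
      simp only [dif_neg h₁, dif_neg h₂] at h
      have := e₂.injective (Subtype.ext h)
      exact Subtype.ext_iff.mp this
  have hfGM : G.image f ⊆ M := by
    intro u hu
    obtain ⟨z, hz, rfl⟩ := Finset.mem_image.mp hu
    exact hfG z hz
  -- the set X*
  set Wall := Finset.univ.biUnion W with hWalldef
  have hWallG : Wall ⊆ G := by
    intro z hz
    obtain ⟨j, _, hj⟩ := Finset.mem_biUnion.mp hz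
    exact hKsubG j (hWsub j hj)
  have hWallcard : Wall.card = ∑ j : Fin s, w j := by
    rw [hWalldef, Finset.card_biUnion]
    · exact Finset.sum_congr rfl (fun j _ => hWcard j)
    · intro p _ q _ hpq
      exact Finset.disjoint_of_subset_left (hWsub p)
        (Finset.disjoint_of_subset_right (hWsub q) (hdisj p q hpq))
  have hSWle : ∑ j : Fin s, w j ≤ D := by
    rw [hDdef]
    exact Finset.sum_le_sum (fun j _ => hwle j)
  set SW := ∑ j : Fin s, w j with hSWdef
  set imWall := Wall.image f with himWalldef
  have himWallcard : imWall.card = SW := by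
    rw [himWalldef, Finset.card_image_of_injective _ hfinj, hWallcard]
  have himWallsub : imWall ⊆ G.image f :=
    Finset.image_subset_image hWallG
  set Rest := M \ (G.image f) with hRestdef
  have hRestcard : x' + 3 * D - SW ≤ Rest.card := by
    rw [hRestdef, Finset.card_sdiff_of_subset hfGM, hMcard,
      Finset.card_image_of_injective _ hfinj, hGcard]
    omega
  obtain ⟨Pad, hPadsub, hPadcard⟩ := Finset.exists_subset_card_eq hRestcard
  set Xs := imWall ∪ Pad with hXsdef
  have hPadim : Disjoint Pad (G.image f) :=
    Finset.disjoint_of_subset_left hPadsub Finset.sdiff_disjoint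
  have hXscard : Xs.card = x' + 3 * D := by
    rw [hXsdef, Finset.card_union_of_disjoint
      (Finset.disjoint_of_subset_left himWallsub hPadim.symm), himWallcard, hPadcard]
    omega
  have hXsM : Xs ⊆ M := by
    rw [hXsdef]
    apply Finset.union_subset (himWallsub.trans hfGM)
    exact hPadsub.trans (hRestdef ▸ Finset.sdiff_subset)
  -- the contradiction: a monochromatic copy of S
  apply hχ i
  refine ⟨fun B => symmDiff Xs (B.image f), std_isCubeEmbedding Xs f hfinj, ?_⟩
  intro B hB
  simp only [Set.mem_iUnion, Finset.mem_coe, Finset.mem_powersetCard] at hB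
  obtain ⟨j, hBsub, hBcard⟩ := hB
  -- construct the corresponding vertex A of F'
  have hvle : (B ∩ W j).card ≤ (V j).card :=
    le_of_le_of_eq (Finset.card_le_card Finset.inter_subset_right) (hWcard j)
  have hBWle : (B \ W j).card ≤ (K' j \ V j).card := by
    have h1 : (B \ W j) ⊆ (K j \ W j) := Finset.sdiff_subset_sdiff hBsub (le_refl _)
    have h2 : (K j \ W j).card = (K' j \ V j).card := by
      rw [Finset.card_sdiff_of_subset (hWsub j), Finset.card_sdiff_of_subset (hVsub j), hK j, hK' j, hWcard j]
    exact h2 ▸ Finset.card_le_card h1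
  obtain ⟨A₁, hA₁sub, hA₁card⟩ := Finset.exists_subset_card_eq hvle
  obtain ⟨A₂, hA₂sub, hA₂card⟩ := Finset.exists_subset_card_eq hBWle
  set A := A₁ ∪ A₂ with hAdef
  have hA₁₂ : Disjoint A₁ A₂ :=
    Finset.disjoint_of_subset_left hA₁sub
      (Finset.disjoint_of_subset_right hA₂sub Finset.disjoint_sdiff)
  have hAK' : A ⊆ K' j := Finset.union_subset (hA₁sub.trans (hVsub j))
    (hA₂sub.trans (Finset.sdiff_subset))
  have hAcard : A.card = a j := by
    rw [hAdef, Finset.card_union_of_disjoint hA₁₂, hA₁card, hA₂card]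
    have := Finset.card_sdiff_add_card_inter B (W j)
    omega
  have hAV : (A ∩ V j).card = (B ∩ W j).card := by
    have : A ∩ V j = A₁ := by
      rw [hAdef, Finset.union_inter_distrib_right]
      have h1 : A₁ ∩ V j = A₁ := Finset.inter_eq_left.mpr hA₁sub
      have h2 : A₂ ∩ V j = ∅ := by
        apply Finset.eq_empty_of_forall_notMem
        intro z hz
        have hz1 := Finset.mem_inter.mp hz
        exact (Finset.mem_sdiff.mp (hA₂sub hz1.1)).2 hz1.2
      rw [h1, h2, Finset.union_empty]
    rw [this, hA₁card]
  have hAF' : A ∈ ⋃ k, ↑((K' k).powersetCard (a k)) := by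
    simp only [Set.mem_iUnion, Finset.mem_coe, Finset.mem_powersetCard]
    exact ⟨j, hAK', hAcard⟩
  have hAcol : χ' (ψ A) = i := hψmono A hAF'
  rw [hcform A] at hAcol
  -- cardinality bookkeeping
  set P := A.image c with hPdef
  set Q := B.image f with hQdef
  have hPcard : P.card = a j := by rw [hPdef, Finset.card_image_of_injective _ hcinj, hAcard]
  have hQcard : Q.card = a j := by rw [hQdef, Finset.card_image_of_injective _ hfinj, hBcard]
  have hPX : (X' ∩ P).card = (B ∩ W j).card := by
    have hPeq : X' ∩ P = (A ∩ V j).image c := by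
      ext u
      simp only [Finset.mem_inter, hPdef, Finset.mem_image, hVdef, Finset.mem_filter]
      constructor
      · rintro ⟨hu, y, hy, rfl⟩
        exact ⟨y, ⟨hy, hAK' hy, hu⟩, rfl⟩
      · rintro ⟨y, ⟨hy, _, hu⟩, rfl⟩
        exact ⟨hu, y, hy, rfl⟩
    rw [hPeq, Finset.card_image_of_injective _ hcinj, hAV]
  have hQX : (Xs ∩ Q).card = (B ∩ W j).card := by
    have hQeq : Xs ∩ Q = (W j ∩ B).image f := by
      rw [hXsdef, Finset.union_inter_distrib_right]
      have h2 : Pad ∩ Q = ∅ := by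
        apply Finset.eq_empty_of_forall_notMem
        intro u hu
        have hu1 := Finset.mem_inter.mp hu
        have : u ∈ G.image f := by
          obtain ⟨z, hz, rfl⟩ := Finset.mem_image.mp hu1.2
          exact Finset.mem_image_of_mem f (hKsubG j (hBsub hz))
        exact (Finset.disjoint_left.mp hPadim) hu1.1 this
      have h1 : imWall ∩ Q = (W j ∩ B).image f := by
        rw [himWalldef, hQdef, ← Finset.image_inter _ _ hfinj]
        congr 1
        ext z
        simp only [Finset.mem_inter, hWalldef, Finset.mem_biUnion, Finset.mem_univ,
          true_and]
        constructor
        · rintro ⟨⟨k, hk⟩, hzB⟩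
          rcases eq_or_ne k j with rfl | hkj
          · exact ⟨hk, hzB⟩
          · exact absurd (hdisj k j hkj)
              (by
                rw [Finset.not_disjoint_iff]
                exact ⟨z, hWsub k hk, hBsub hzB⟩)
        · rintro ⟨hzW, hzB⟩
          exact ⟨⟨j, hzW⟩, hzB⟩
      rw [h1, h2, Finset.union_empty]
    rw [hQeq, Finset.card_image_of_injective _ hfinj, Finset.inter_comm]
  -- put everything together
  show χ (symmDiff Xs Q) = i
  have hsubM : symmDiff Xs Q ⊆ M := by
    apply (symmDiff_subset_union Xs Q).trans
    apply Finset.union_subset hXsM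
    rw [hQdef]
    intro u hu
    obtain ⟨z, hz, rfl⟩ := Finset.mem_image.mp hu
    exact hfGM (Finset.mem_image_of_mem f (hKsubG j (hBsub hz)))
  rw [hlayer _ hsubM]
  rw [hχ'def] at hAcol
  simp only at hAcol
  rw [← hAcol]
  congr 1
  -- card equality
  have e1 := Finset.card_sdiff_add_card_inter Xs Q
  have e2 := Finset.card_sdiff_add_card_inter Q Xs
  have e3 := Finset.card_sdiff_add_card_inter X' P
  have e4 := Finset.card_sdiff_add_card_inter P X'
  rw [Finset.inter_comm] at e2 e4
  rw [card_symmDiff_parts, card_symmDiff_parts]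
  omega
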